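/- Let σ be a stability condition on a triangulated (Krull–Schmidt) category D such that every indecomposable object is semistable. Then gldim σ ≤ 1. -/

import Mathlib

open CategoryTheory CategoryTheory.Limits CategoryTheory.Pretriangulated

universe v u

variable (C : Type u) [Category.{v} C] [Preadditive C] [HasZeroObject C]
  [HasShift C ℤ] [∀ n : ℤ, (shiftFunctor C n).Additive] [Pretriangulated C]
  [HasFiniteBiproducts C]

/-- A Bridgeland stability condition, encoded by a central charge on objects and a slicing. -/
structure StabilityCondition where
  Z : C → ℂ
  P : ℝ → Set C
  mem_of_iso : ∀ {φ : ℝ} {E F : C}, (E ≅ F) → E ∈ P φ → F ∈ P φ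
  charge : ∀ {φ : ℝ} {E : C}, E ∈ P φ → ¬ IsZero E →
    ∃ m : ℝ, 0 < m ∧ Z E = (m : ℂ) * Complex.exp (Real.pi * φ * Complex.I)
  shift_mem : ∀ (φ : ℝ) (E : C), E ∈ P φ ↔ E⟦(1 : ℤ)⟧ ∈ P (φ + 1)
  sum_mem : ∀ {φ : ℝ} {X Y : C}, X ∈ P φ → Y ∈ P φ → (X ⊞ Y) ∈ P φ
  summand_mem : ∀ {φ : ℝ} {X Y : C}, (X ⊞ Y) ∈ P φ → X ∈ P φ
  hom_zero : ∀ {φ₁ φ₂ : ℝ}, φ₂ < φ₁ → ∀ {E F : C}, E ∈ P φ₁ → F ∈ P φ₂ →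
    ∀ f : E ⟶ F, f = 0
  HN : ∀ E : C, ¬ IsZero E → ∃ (n : ℕ) (obj : Fin (n + 1) → C) (φ : Fin n → ℝ),
    IsZero (obj 0) ∧ Nonempty (obj (Fin.last n) ≅ E) ∧ StrictAnti φ ∧
    ∀ i : Fin n, ∃ (A : C) (f : obj i.castSucc ⟶ obj i.succ) (g : obj i.succ ⟶ A)
      (h : A ⟶ (obj i.castSucc)⟦(1 : ℤ)⟧),
      (Triangle.mk f g h ∈ distTriang C) ∧ A ∈ P (φ i) ∧ ¬ IsZero A

variable {C}

/-- `E` is semistable iff it lies in some slice. -/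
def StabilityCondition.IsSemistable (σ : StabilityCondition C) (E : C) : Prop :=
  ∃ φ : ℝ, E ∈ σ.P φ

/-- The global dimension of a stability condition. -/
noncomputable def StabilityCondition.gldim (σ : StabilityCondition C) : EReal :=
  sSup {d : EReal | ∃ (φ₁ φ₂ : ℝ) (E F : C) (f : E ⟶ F),
    E ∈ σ.P φ₁ ∧ F ∈ σ.P φ₂ ∧ f ≠ 0 ∧ d = ((φ₂ - φ₁ : ℝ) : EReal)}

/-- An object is indecomposable if it is nonzero and any biproduct decomposition is trivial. -/
def IsIndec (E : C) : Prop :=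
  ¬ IsZero E ∧ ∀ (X Y : C), (E ≅ X ⊞ Y) → IsZero X ∨ IsZero Y

/-- `E` is stable of phase `φ`: it is a nonzero object of `P(φ)` admitting no nontrivial
extension decomposition inside `P(φ)` (i.e. it is simple in the abelian category `P(φ)`). -/
def StabilityCondition.IsStableOfPhase (σ : StabilityCondition C) (E : C) (φ : ℝ) : Prop :=
  E ∈ σ.P φ ∧ ¬ IsZero E ∧ ∀ (A B : C) (f : A ⟶ E) (g : E ⟶ B) (h : B ⟶ A⟦(1 : ℤ)⟧),
    (Triangle.mk f g h ∈ distTriang C) → A ∈ σ.P φ → B ∈ σ.P φ →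
    ¬ IsZero A → ¬ IsZero B → False

/-- The Krull–Schmidt property: every nonzero object is a finite biproduct of indecomposables. -/
def KrullSchmidt : Prop :=
  ∀ X : C, ¬ IsZero X → ∃ (m : ℕ) (f : Fin m → C),
    (∀ i, IsIndec (f i)) ∧ Nonempty (X ≅ ⨁ f)

/-- In a Krull–Schmidt triangulated category, if every indecomposable object is
semistable then `gldim σ ≤ 1`. -/
theorem gldim_le_one_of_totally_semistable (hKS : KrullSchmidt (C := C))
    (σ : StabilityCondition C)
    (htot : ∀ E : C, IsIndec E → σ.IsSemistable E) :
    σ.gldim ≤ 1 := by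
  refine sSup_le ?_
  rintro d ⟨φ₁, φ₂, E, F, f, hE, hF, hf, rfl⟩
  have key : φ₂ - φ₁ ≤ 1 := by
    by_contra hlt
    push_neg at hlt
    have h12 : φ₁ + 1 < φ₂ := by linarith
    have h1 : φ₁ < φ₂ := by linarith
    obtain ⟨M, g, w, hT⟩ := Pretriangulated.distinguished_cocone_triangle f
    have hfg : f ≫ g = 0 := comp_distTriang_mor_zero₁₂ _ hT
    have hE1 : E⟦(1 : ℤ)⟧ ∈ σ.P (φ₁ + 1) := (σ.shift_mem φ₁ E).mp hE
    have hS : ∃ S : M ⟶ F, g ≫ S ≫ g = g := by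
      by_cases hM : IsZero M
      · refine ⟨0, ?_⟩
        rw [hM.eq_of_tgt g 0]
        simp
      · obtain ⟨m, obj, hindec, ⟨e⟩⟩ := hKS M hM
        set q : ∀ i : Fin m, (M ⟶ obj i) := fun i => e.hom ≫ biproduct.π obj i with hq
        set j : ∀ i : Fin m, (obj i ⟶ M) := fun i => biproduct.ι obj i ≫ e.inv with hj
        have hqj : (∑ i : Fin m, q i ≫ j i) = 𝟙 M := by
          have : (∑ i : Fin m, q i ≫ j i)
              = e.hom ≫ (∑ i : Fin m, biproduct.π obj i ≫ biproduct.ι obj i) ≫ e.inv := by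
            rw [Preadditive.sum_comp, Preadditive.comp_sum]
            simp [hq, hj]
          rw [this, biproduct.total]
          simp
        have hi : ∀ i : Fin m, ∃ s : obj i ⟶ F,
            g ≫ q i ≫ s ≫ g = g ≫ q i ≫ j i := by
          intro i
          obtain ⟨ψ, hψ⟩ := htot (obj i) (hindec i)
          by_cases hcase : φ₁ + 1 < ψ
          · have hw : j i ≫ w = 0 := σ.hom_zero hcase hψ hE1 _
            obtain ⟨s, hs⟩ := Pretriangulated.Triangle.coyoneda_exact₃ _ hT (j i) hw
            refine ⟨s, ?_⟩
            rw [hs]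
            rfl
          · push_neg at hcase
            have hg0 : g ≫ q i = 0 :=
              σ.hom_zero (show ψ < φ₂ by linarith) hF hψ _
            refine ⟨0, ?_⟩
            have h2 : g ≫ q i ≫ j i = 0 := by
              rw [← Category.assoc, hg0, zero_comp]
            rw [h2, ← Category.assoc, hg0, zero_comp]
        choose s hs using hi
        refine ⟨∑ i : Fin m, q i ≫ s i, ?_⟩
        calc g ≫ (∑ i : Fin m, q i ≫ s i) ≫ g
            = ∑ i : Fin m, g ≫ q i ≫ s i ≫ g := by
              rw [Preadditive.sum_comp, Preadditive.comp_sum]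
              simp
          _ = ∑ i : Fin m, g ≫ q i ≫ j i := by
              exact Finset.sum_congr rfl fun i _ => hs i
          _ = g ≫ (∑ i : Fin m, q i ≫ j i) := by
              rw [Preadditive.comp_sum]
          _ = g := by rw [hqj]; simp
    obtain ⟨S, hSg⟩ := hS
    have ha : (𝟙 F - g ≫ S) ≫ g = 0 := by
      rw [Preadditive.sub_comp, Category.id_comp, Category.assoc, hSg, sub_self]
    obtain ⟨b, hb⟩ := Pretriangulated.Triangle.coyoneda_exact₂ _ hT (𝟙 F - g ≫ S) ha
    have hb0 : b = 0 := σ.hom_zero h1 hF hE b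
    rw [hb0, zero_comp] at hb
    have hb : 𝟙 F = g ≫ S := sub_eq_zero.mp hb
    apply hf
    calc f = f ≫ 𝟙 F := by simp
      _ = f ≫ g ≫ S := by rw [hb]
      _ = 0 := by rw [← Category.assoc, hfg, zero_comp]
  have : ((φ₂ - φ₁ : ℝ) : EReal) ≤ ((1 : ℝ) : EReal) := EReal.coe_le_coe_iff.mpr key
  simpa using this
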